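/- Let B ⊂ ℂ^{n-1} be a ball, Δ ⊂ ℂ the unit disc, 0 < r < R < 1, and f holomorphic on a neighborhood of the closure of B × RΔ. Then for every 0 < ε < 1 - R and z ∈ (1-ε)(B × Δ) with second coordinate of modulus < r, |f(z)|² is bounded by a constant (depending only on B, R, r, ε) times the integral of |f|² over B × (RΔ \ rΔ̄). -/

import Mathlib

open Complex Topology Filter Metric MeasureTheory Set

noncomputable section

/-- Subharmonicity on a subset of `ℂ`: upper semicontinuity together with
majorization by real parts of holomorphic polynomials on closed discs
(the classical harmonic-majorant characterization). -/
def SubharmonicOn (u : ℂ → EReal) (s : Set ℂ) : Prop :=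
  UpperSemicontinuousOn u s ∧
  ∀ (c : ℂ) (r : ℝ), 0 < r → Metric.closedBall c r ⊆ s →
    ∀ p : Polynomial ℂ,
      (∀ z ∈ Metric.sphere c r, u z ≤ ((p.eval z).re : EReal)) →
      ∀ z ∈ Metric.closedBall c r, u z ≤ ((p.eval z).re : EReal)

/-- Plurisubharmonicity on a subset of a complex normed space:
upper semicontinuity and subharmonicity along every complex line. -/
def PlurisubharmonicOn {E : Type*} [NormedAddCommGroup E] [NormedSpace ℂ E]
    (u : E → EReal) (Ω : Set E) : Prop :=
  UpperSemicontinuousOn u Ω ∧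
  ∀ z w : E, SubharmonicOn (fun t : ℂ => u (z + t • w)) {t : ℂ | z + t • w ∈ Ω}

/-- A function is pluriharmonic on `Ω` if it is locally the real part of
a holomorphic function. -/
def PluriharmonicOn {E : Type*} [NormedAddCommGroup E] [NormedSpace ℂ E]
    (h : E → ℝ) (Ω : Set E) : Prop :=
  ∀ z ∈ Ω, ∃ U : Set E, IsOpen U ∧ z ∈ U ∧ U ⊆ Ω ∧
    ∃ f : E → ℂ, DifferentiableOn ℂ f U ∧ ∀ w ∈ U, h w = (f w).re

/-- `K` is complete pluripolar in `S`: every point of `K` has a neighborhood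
`U ⊆ S` and a plurisubharmonic function `φ` on `U` with `K ∩ U = φ⁻¹(-∞)`. -/
def CompletePluripolarIn {E : Type*} [NormedAddCommGroup E] [NormedSpace ℂ E]
    (K S : Set E) : Prop :=
  ∀ z ∈ K, ∃ U : Set E, IsOpen U ∧ z ∈ U ∧ U ⊆ S ∧
    ∃ φ : E → EReal, PlurisubharmonicOn φ U ∧ K ∩ U = {w ∈ U | φ w = ⊥}

/-- The Levi form of a real-valued function `φ` at `z` in the complex direction `v`:
`∂∂̄φ(z)(v,v̄)`, computed as one quarter of the Laplacian of `t ↦ φ (z + t v)` at `t = 0`. -/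
def leviForm {E : Type*} [NormedAddCommGroup E] [NormedSpace ℂ E]
    (φ : E → ℝ) (z v : E) : ℝ :=
  (1/4) * ((iteratedFDeriv ℝ 2 (fun t : ℂ => φ (z + t • v)) 0) ![1, 1]
        + (iteratedFDeriv ℝ 2 (fun t : ℂ => φ (z + t • v)) 0) ![Complex.I, Complex.I])

/-- The Wirtinger derivative `∂φ(z)(v) = Σ vⱼ ∂φ/∂zⱼ` of a real-valued function
in the complex direction `v`. -/
def wirtDeriv {E : Type*} [NormedAddCommGroup E] [NormedSpace ℂ E]
    (φ : E → ℝ) (z v : E) : ℂ :=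
  (1/2 : ℂ) * ((fderiv ℝ φ z v : ℝ) - Complex.I * ((fderiv ℝ φ z (Complex.I • v) : ℝ) : ℂ))

end

section CauchyL2Aux

open scoped Real

lemma my_polar_symm_eq (ρ θ : ℝ) :
    Complex.polarCoord.symm (ρ, θ) = circleMap 0 ρ θ := by
  rw [Complex.polarCoord_symm_apply]
  simp only [circleMap, zero_add, Complex.exp_mul_I]
  push_cast
  ring

/-- Polar coordinates for an annulus integral. -/
lemma my_polar_annulus (F : ℂ → ℝ) (a b : ℝ) (ha : 0 ≤ a) (hab : a < b)
    (hF : ContinuousOn F (Metric.closedBall 0 b)) :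
    IntegrableOn (fun ρ => ∫ θ in Ioo (-π) π, ρ * F (circleMap 0 ρ θ)) (Ioo a b) ∧
    ∫ w in Metric.ball (0:ℂ) b \ Metric.closedBall 0 a, F w
      = ∫ ρ in Ioo a b, ∫ θ in Ioo (-π) π, ρ * F (circleMap 0 ρ θ) := by
  have hπ := Real.pi_pos
  set A : Set ℂ := Metric.ball 0 b \ Metric.closedBall 0 a with hA
  have hAm : MeasurableSet A := measurableSet_ball.diff measurableSet_closedBall
  set H : ℝ × ℝ → ℝ := fun p => p.1 * F (circleMap 0 p.1 p.2) with hH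
  -- continuity of H on the compact rectangle
  have hφ : Continuous fun p : ℝ × ℝ => circleMap 0 p.1 p.2 := by
    unfold circleMap
    continuity
  have hHK : ContinuousOn H (Icc a b ×ˢ Icc (-π) π) := by
    apply ContinuousOn.mul continuous_fst.continuousOn
    apply hF.comp hφ.continuousOn
    rintro ⟨ρ, θ⟩ ⟨hρ, hθ⟩
    simp only [mem_closedBall, Complex.dist_eq, sub_zero]
    calc ‖circleMap 0 ρ θ‖ = |ρ| := norm_circleMap_zero ρ θ
    _ ≤ b := abs_le.2 ⟨by linarith [hρ.1], hρ.2⟩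
  have hHint : IntegrableOn H (Ioo a b ×ˢ Ioo (-π) π) := by
    apply (hHK.integrableOn_compact (isCompact_Icc.prod isCompact_Icc)).mono_set
    exact Set.prod_mono Ioo_subset_Icc_self Ioo_subset_Icc_self
  have htarget : polarCoord.target = Ioi (0:ℝ) ×ˢ Ioo (-π) π := rfl
  have key : ∫ w in A, F w = ∫ p in Ioo a b ×ˢ Ioo (-π) π, H p := by
    rw [← integral_indicator hAm, ← Complex.integral_comp_polarCoord_symm (A.indicator F)]
    have : ∀ p ∈ polarCoord.target,
        p.1 • (A.indicator F) (Complex.polarCoord.symm p)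
          = (Ioo a b ×ˢ Ioo (-π) π).indicator H p := by
      rintro ⟨ρ, θ⟩ hp
      rw [htarget] at hp
      obtain ⟨hρ, hθ⟩ := hp
      simp only [mem_Ioi] at hρ
      have habs : ‖Complex.polarCoord.symm (ρ, θ)‖ = ρ := by
        rw [Complex.norm_polarCoord_symm]; exact abs_of_pos hρ
      by_cases hmem : ρ ∈ Ioo a b
      · have hin : Complex.polarCoord.symm (ρ, θ) ∈ A := by
          constructor
          · simp only [mem_ball, Complex.dist_eq, sub_zero, habs]
            exact hmem.2
          · simp only [mem_closedBall, Complex.dist_eq, sub_zero, habs,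
              not_le]
            exact hmem.1
        rw [Set.indicator_of_mem hin, Set.indicator_of_mem (by exact ⟨hmem, hθ⟩)]
        simp only [smul_eq_mul, hH, my_polar_symm_eq]
      · have hout : Complex.polarCoord.symm (ρ, θ) ∉ A := by
          intro hin
          apply hmem
          obtain ⟨h1, h2⟩ := hin
          simp only [mem_ball, Complex.dist_eq, sub_zero, habs] at h1
          simp only [mem_closedBall, Complex.dist_eq, sub_zero, habs,
            not_le] at h2
          exact ⟨h2, h1⟩
        rw [Set.indicator_of_notMem hout, Set.indicator_of_notMem (by
          intro hc; exact hmem hc.1)]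
        simp
    have hsub : Ioo a b ×ˢ Ioo (-π) π ⊆ Ioi (0:ℝ) ×ˢ Ioo (-π) π :=
      Set.prod_mono (fun x hx => lt_of_le_of_lt ha hx.1) subset_rfl
    rw [setIntegral_congr_fun (polarCoord.open_target.measurableSet) this,
      setIntegral_indicator ((measurableSet_Ioo.prod measurableSet_Ioo)), htarget,
      Set.inter_eq_self_of_subset_right hsub]
  constructor
  · have h2 : Integrable (fun ρ => ∫ θ, H (ρ, θ) ∂(volume.restrict (Ioo (-π) π)))
        (volume.restrict (Ioo a b)) := by
      apply Integrable.integral_prod_left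
      rw [Measure.prod_restrict, ← Measure.volume_eq_prod]
      exact hHint
    exact h2
  · have hHint' : IntegrableOn H (Ioo a b ×ˢ Ioo (-π) π) (volume.prod volume) := by
      rw [← Measure.volume_eq_prod]; exact hHint
    rw [key, Measure.volume_eq_prod ℝ ℝ, setIntegral_prod _ hHint']


/-- Cauchy-type averaged estimate over an annulus. -/
lemma my_cauchy_avg (g : ℂ → ℂ) (U : Set ℂ) (hU : IsOpen U)
    (hg : DifferentiableOn ℂ g U) (a b : ℝ) (ha : 0 ≤ a) (hab : a < b)
    (hsub : Metric.closedBall (0:ℂ) b ⊆ U) (ζ : ℂ) (hζ : ‖ζ‖ ≤ a)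
    (M : ℝ) (hM0 : 0 ≤ M)
    (hM : ∀ ρ ∈ Ioo a b, ∀ θ : ℝ, ρ ≤ M * ‖circleMap 0 ρ θ - ζ‖) :
    ‖g ζ‖ * ((b^2 - a^2)/2) ≤ (M / (2*π)) *
      ∫ w in Metric.ball (0:ℂ) b \ Metric.closedBall 0 a, ‖g w‖ := by
  have hπ := Real.pi_pos
  set F : ℂ → ℝ := fun w => ‖g w‖ with hF
  have hFc : ContinuousOn F (Metric.closedBall 0 b) := (hg.continuousOn.mono hsub).norm
  obtain ⟨hInt, hEq⟩ := my_polar_annulus F a b ha hab hFc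
  -- key pointwise estimate in ρ
  have key : ∀ ρ ∈ Ioo a b,
      2*π*‖g ζ‖ ≤ M * ∫ θ in Ioo (-π) π, F (circleMap 0 ρ θ) := by
    intro ρ hρ
    have hρ0 : 0 < ρ := lt_of_le_of_lt ha hρ.1
    have hballU : Metric.closedBall (0:ℂ) ρ ⊆ U :=
      subset_trans (Metric.closedBall_subset_closedBall hρ.2.le) hsub
    have hd : DiffContOnCl ℂ g (Metric.ball 0 ρ) :=
      ⟨hg.mono (subset_trans Metric.ball_subset_closedBall hballU),
       hg.continuousOn.mono (by
         rw [closure_ball (0:ℂ) hρ0.ne']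
         exact hballU)⟩
    have hmem : ζ ∈ Metric.ball (0:ℂ) ρ := by
      rw [mem_ball_zero_iff]
      exact lt_of_le_of_lt hζ hρ.1
    have hcauchy := hd.circleIntegral_sub_inv_smul hmem
    -- continuity facts along the circle
    have hgc : Continuous fun θ : ℝ => g (circleMap 0 ρ θ) := by
      apply hg.continuousOn.comp_continuous (continuous_circleMap 0 ρ)
      intro θ
      apply hballU
      simp [Metric.mem_closedBall, Complex.dist_eq, norm_circleMap_zero, abs_of_pos hρ0,
        le_refl]
    have hne : ∀ θ : ℝ, circleMap 0 ρ θ - ζ ≠ 0 := by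
      intro θ
      have : ‖ζ‖ < ‖circleMap 0 ρ θ‖ := by
        rw [norm_circleMap_zero, abs_of_pos hρ0]
        exact lt_of_le_of_lt hζ hρ.1
      intro h
      rw [sub_eq_zero] at h
      rw [h] at this
      exact lt_irrefl _ this
    -- bound the circle integral
    have hnorm : ‖∮ z in C(0, ρ), (z - ζ)⁻¹ • g z‖ ≤
        M * ∫ θ in (0:ℝ)..(2*π), F (circleMap 0 ρ θ) := by
      rw [circleIntegral]
      have hle : ∀ θ : ℝ, ‖deriv (circleMap 0 ρ) θ •
          ((circleMap 0 ρ θ - ζ)⁻¹ • g (circleMap 0 ρ θ))‖ ≤ M * F (circleMap 0 ρ θ) := by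
        intro θ
        rw [deriv_circleMap, norm_smul, norm_smul, norm_mul,
          norm_circleMap_zero, Complex.norm_I, mul_one, abs_of_pos hρ0,
          norm_inv]
        rw [← mul_assoc]
        apply mul_le_mul_of_nonneg_right _ (norm_nonneg _)
        rw [mul_inv_le_iff₀ (norm_pos_iff.mpr (hne θ))]
        exact hM ρ hρ θ
      calc ‖∫ θ in (0:ℝ)..(2*π), deriv (circleMap 0 ρ) θ •
            ((circleMap 0 ρ θ - ζ)⁻¹ • g (circleMap 0 ρ θ))‖
          ≤ ∫ θ in (0:ℝ)..(2*π), ‖deriv (circleMap 0 ρ) θ •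
            ((circleMap 0 ρ θ - ζ)⁻¹ • g (circleMap 0 ρ θ))‖ :=
            intervalIntegral.norm_integral_le_integral_norm (by positivity)
        _ ≤ ∫ θ in (0:ℝ)..(2*π), M * F (circleMap 0 ρ θ) := by
            have hc1 : Continuous fun θ : ℝ => deriv (circleMap 0 ρ) θ := by
              have : (fun θ : ℝ => deriv (circleMap 0 ρ) θ)
                  = fun θ : ℝ => circleMap 0 ρ θ * Complex.I := by
                funext θ; exact deriv_circleMap 0 ρ θ
              rw [this]
              exact (continuous_circleMap 0 ρ).mul continuous_const
            have hc2 : Continuous fun θ : ℝ =>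
                (circleMap 0 ρ θ - ζ)⁻¹ • g (circleMap 0 ρ θ) :=
              (((continuous_circleMap 0 ρ).sub continuous_const).inv₀ hne).smul hgc
            apply intervalIntegral.integral_mono_on (by positivity)
            · exact (hc1.smul hc2).norm.intervalIntegrable _ _
            · exact (continuous_const.mul hgc.norm).intervalIntegrable _ _
            · intro θ _; exact hle θ
        _ = M * ∫ θ in (0:ℝ)..(2*π), F (circleMap 0 ρ θ) := by
            rw [intervalIntegral.integral_const_mul]
    -- convert interval integral 0..2π to Ioo (-π) π
    have hper : (∫ θ in (0:ℝ)..(2*π), F (circleMap 0 ρ θ))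
        = ∫ θ in Ioo (-π) π, F (circleMap 0 ρ θ) := by
      have hperiodic : Function.Periodic (fun θ : ℝ => F (circleMap 0 ρ θ)) (2*π) :=
        (periodic_circleMap 0 ρ).comp F
      have h1 : (∫ θ in (0:ℝ)..(0+2*π), F (circleMap 0 ρ θ))
          = ∫ θ in (-π)..(-π+2*π), F (circleMap 0 ρ θ) :=
        hperiodic.intervalIntegral_add_eq 0 (-π)
      rw [zero_add] at h1
      rw [h1, show -π + 2*π = π by ring,
        intervalIntegral.integral_of_le (by linarith : -π ≤ π),
        integral_Ioc_eq_integral_Ioo]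
    -- combine
    have h2 : (2*π) * ‖g ζ‖ = ‖∮ z in C(0, ρ), (z - ζ)⁻¹ • g z‖ := by
      rw [hcauchy, norm_smul]
      congr 1
      simp only [norm_mul, Complex.norm_I, Complex.norm_real, Real.norm_eq_abs,
        Complex.norm_two, mul_one, abs_of_pos hπ]
    rw [h2, ← hper]
    exact hnorm
  -- integrate key over ρ ∈ Ioo a b
  have hmono : ∫ ρ in Ioo a b, (2*π*‖g ζ‖) * ρ
      ≤ ∫ ρ in Ioo a b, M * ∫ θ in Ioo (-π) π, ρ * F (circleMap 0 ρ θ) := by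
    apply integral_mono_of_nonneg
    · filter_upwards [ae_restrict_mem measurableSet_Ioo] with ρ hρ
      have : 0 < ρ := lt_of_le_of_lt ha hρ.1
      positivity
    · exact hInt.const_mul M
    · filter_upwards [ae_restrict_mem measurableSet_Ioo] with ρ hρ
      have hρ0 : 0 ≤ ρ := le_trans ha hρ.1.le
      have h3 : ∫ θ in Ioo (-π) π, ρ * F (circleMap 0 ρ θ)
          = ρ * ∫ θ in Ioo (-π) π, F (circleMap 0 ρ θ) := integral_const_mul ρ _
      rw [h3]
      calc 2*π*‖g ζ‖*ρ = ρ*(2*π*‖g ζ‖) := by ring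
        _ ≤ ρ*(M * ∫ θ in Ioo (-π) π, F (circleMap 0 ρ θ)) :=
            mul_le_mul_of_nonneg_left (key ρ hρ) hρ0
        _ = M * (ρ * ∫ θ in Ioo (-π) π, F (circleMap 0 ρ θ)) := by ring
  have hlhs : ∫ ρ in Ioo a b, (2*π*‖g ζ‖) * ρ = (2*π*‖g ζ‖) * ((b^2-a^2)/2) := by
    rw [integral_const_mul]
    congr 1
    rw [← integral_Ioc_eq_integral_Ioo, ← intervalIntegral.integral_of_le hab.le,
      integral_id]
  have hrhs : ∫ ρ in Ioo a b, M * ∫ θ in Ioo (-π) π, ρ * F (circleMap 0 ρ θ)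
      = M * ∫ w in Metric.ball (0:ℂ) b \ Metric.closedBall 0 a, F w := by
    rw [integral_const_mul, ← hEq]
  rw [hlhs, hrhs] at hmono
  have h2π : (0:ℝ) < 2*π := by linarith
  calc ‖g ζ‖ * ((b^2 - a^2)/2) = (2*π*‖g ζ‖) * ((b^2-a^2)/2) / (2*π) := by
        field_simp
    _ ≤ M * (∫ w in Metric.ball (0:ℂ) b \ Metric.closedBall 0 a, F w) / (2*π) := by
        gcongr
    _ = (M / (2*π)) * ∫ w in Metric.ball (0:ℂ) b \ Metric.closedBall 0 a, F w := by
        ring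

/-- Sub-mean value inequality on a disc. -/
lemma my_disc_mean (g : ℂ → ℂ) (c : ℂ) (δ : ℝ) (hδ : 0 < δ) (U : Set ℂ)
    (hU : IsOpen U) (hsub : Metric.closedBall c δ ⊆ U)
    (hg : DifferentiableOn ℂ g U) :
    ‖g c‖ ≤ (π * δ^2)⁻¹ * ∫ w in Metric.ball c δ, ‖g w‖ := by
  have hπ := Real.pi_pos
  set g' : ℂ → ℂ := fun w => g (c + w) with hg'
  set U' : Set ℂ := (fun w => c + w) ⁻¹' U with hU'
  have hU'open : IsOpen U' := hU.preimage (continuous_const.add continuous_id)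
  have hsub' : Metric.closedBall (0:ℂ) δ ⊆ U' := by
    intro w hw
    apply hsub
    simp only [Metric.mem_closedBall] at hw ⊢
    simpa [Complex.dist_eq] using hw
  have hg'd : DifferentiableOn ℂ g' U' :=
    hg.comp ((differentiable_const c).add differentiable_id).differentiableOn
      (fun w hw => hw)
  have havg := my_cauchy_avg g' U' hU'open hg'd 0 δ le_rfl hδ hsub' 0 (by simp) 1
    zero_le_one (by
      intro ρ hρ θ
      rw [one_mul, sub_zero, norm_circleMap_zero, abs_of_pos hρ.1])
  have h0 : g' 0 = g c := by simp [hg']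
  have hde : Metric.ball (0:ℂ) δ \ Metric.closedBall 0 0 =ᵐ[volume] Metric.ball (0:ℂ) δ := by
    rw [closedBall_zero]
    apply diff_ae_eq_self.mpr
    exact measure_mono_null inter_subset_right (measure_singleton 0)
  have htrans : ∫ w in Metric.ball (0:ℂ) δ, ‖g' w‖ = ∫ w in Metric.ball c δ, ‖g w‖ := by
    have hmp : MeasurePreserving (fun w : ℂ => c + w) volume volume :=
      measurePreserving_add_left volume c
    have hemb : MeasurableEmbedding (fun w : ℂ => c + w) :=
      (MeasurableEquiv.addLeft c).measurableEmbedding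
    have hpre : (fun w : ℂ => c + w) ⁻¹' (Metric.ball c δ) = Metric.ball 0 δ := by
      ext w
      simp [Complex.dist_eq, Metric.mem_ball]
    rw [← hpre, hmp.setIntegral_preimage_emb hemb (fun w => ‖g w‖) (Metric.ball c δ)]
  rw [h0] at havg
  replace havg := havg.trans_eq (congrArg (fun t => 1 / (2*π) * t)
    ((setIntegral_congr_set (f := fun w => ‖g' w‖) hde).trans htrans))
  have hδ2 : (0:ℝ) < δ^2/2 := by positivity
  calc ‖g c‖ = (‖g c‖ * ((δ^2 - 0^2)/2)) / (δ^2/2) := by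
        rw [show (δ^2 - 0^2)/2 = δ^2/2 by ring]
        field_simp
    _ ≤ ((1 / (2*π)) * ∫ w in Metric.ball c δ, ‖g w‖) / (δ^2/2) := by gcongr
    _ = (π * δ^2)⁻¹ * ∫ w in Metric.ball c δ, ‖g w‖ := by
        field_simp
/-- Annulus estimate in one variable. -/
lemma my_annulus_bound (g : ℂ → ℂ) (r R : ℝ) (hr : 0 < r) (hrR : r < R)
    (U : Set ℂ) (hU : IsOpen U) (hsub : Metric.closedBall (0:ℂ) R ⊆ U)
    (hg : DifferentiableOn ℂ g U) (ζ : ℂ) (hζ : ‖ζ‖ < r) :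
    ‖g ζ‖ ≤ (2*R/((R-r) * π * (R^2 - ((r+R)/2)^2))) *
      ∫ w in Metric.ball (0:ℂ) R \ Metric.closedBall 0 r, ‖g w‖ := by
  have hπ := Real.pi_pos
  set r' : ℝ := (r+R)/2 with hr'
  have h1 : r < r' := by rw [hr']; linarith
  have h2 : r' < R := by rw [hr']; linarith
  have h3 : 0 < r' := lt_trans hr h1
  have hRrne : (0:ℝ) < R - r := by linarith
  have hM0 : (0:ℝ) ≤ 2*R/(R-r) := div_nonneg (by linarith) hRrne.le
  have havg := my_cauchy_avg g U hU hg r' R h3.le h2 hsub ζ (hζ.le.trans h1.le)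
    (2*R/(R-r)) hM0 (by
      intro ρ hρ θ
      have hw : r' - r ≤ ‖circleMap 0 ρ θ - ζ‖ := by
        have := norm_sub_norm_le (circleMap 0 ρ θ) ζ
        simp only [norm_circleMap_zero,
          abs_of_pos (lt_trans h3 hρ.1)] at this
        have : ρ - ‖ζ‖ ≤ ‖circleMap 0 ρ θ - ζ‖ := this
        have h4 : r' - r ≤ ρ - ‖ζ‖ := by
          have := hρ.1
          linarith [hζ.le]
        linarith
      calc ρ ≤ R := hρ.2.le
        _ = (2*R/(R-r)) * ((R - r)/2) := by
            field_simp
        _ ≤ (2*R/(R-r)) * (r' - r) := by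
            apply mul_le_mul_of_nonneg_left _ hM0
            rw [hr']; linarith
        _ ≤ (2*R/(R-r)) * ‖circleMap 0 ρ θ - ζ‖ :=
            mul_le_mul_of_nonneg_left hw hM0)
  -- enlarge the annulus from r' to r
  have hgint : IntegrableOn (fun w => ‖g w‖)
      (Metric.ball (0:ℂ) R \ Metric.closedBall 0 r) := by
    apply IntegrableOn.mono_set (t := Metric.closedBall (0:ℂ) R)
    · exact ((hg.continuousOn.mono hsub).norm).integrableOn_compact
        (isCompact_closedBall 0 R)
    · exact fun w hw => Metric.ball_subset_closedBall hw.1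
  have hmono : (∫ w in Metric.ball (0:ℂ) R \ Metric.closedBall 0 r', ‖g w‖)
      ≤ ∫ w in Metric.ball (0:ℂ) R \ Metric.closedBall 0 r, ‖g w‖ := by
    apply setIntegral_mono_set hgint
    · filter_upwards with w using norm_nonneg _
    · apply HasSubset.Subset.eventuallyLE
      exact diff_subset_diff_right (Metric.closedBall_subset_closedBall h1.le)
  have hRr : (0:ℝ) < (R^2 - r'^2)/2 := by
    have : r'^2 < R^2 := by nlinarith
    linarith
  have hRr2 : (R:ℝ)^2 - r'^2 ≠ 0 := by linarith
  have hπne : (π:ℝ) ≠ 0 := ne_of_gt hπ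
  have hC : (0:ℝ) ≤ (2*R/(R-r)) / (2*π) := by positivity
  calc ‖g ζ‖ = (‖g ζ‖ * ((R^2 - r'^2)/2)) / ((R^2 - r'^2)/2) := by
        rw [mul_div_assoc, div_self hRr.ne', mul_one]
    _ ≤ (((2*R/(R-r)) / (2*π)) *
        ∫ w in Metric.ball (0:ℂ) R \ Metric.closedBall 0 r, ‖g w‖) / ((R^2 - r'^2)/2) := by
        apply (div_le_div_iff_of_pos_right hRr).mpr
        exact havg.trans (mul_le_mul_of_nonneg_left hmono hC)
    _ = (2*R/((R-r) * π * (R^2 - ((r+R)/2)^2))) *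
        ∫ w in Metric.ball (0:ℂ) R \ Metric.closedBall 0 r, ‖g w‖ := by
        rw [← hr']
        field_simp

set_option maxHeartbeats 2000000 in
/-- Sub-mean value inequality on a polydisc, by induction on the dimension. -/
lemma my_polydisc_mean : ∀ (m : ℕ) (g : (Fin m → ℂ) → ℂ) (c : Fin m → ℂ) (δ : ℝ),
    0 < δ → ∀ (U : Set (Fin m → ℂ)), IsOpen U → Metric.closedBall c δ ⊆ U →
    DifferentiableOn ℂ g U →
    ‖g c‖ ≤ ((π * δ^2)^m)⁻¹ * ∫ y in Metric.ball c δ, ‖g y‖ := by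
  intro m
  induction m with
  | zero =>
    intro g c δ hδ U hU hsub hg
    have hss : Subsingleton (Fin 0 → ℂ) := ⟨fun a b => funext fun i => i.elim0⟩
    have hball : Metric.ball c δ = (univ : Set (Fin 0 → ℂ)) := by
      ext x
      simp only [Metric.mem_ball, mem_univ, iff_true]
      rw [Subsingleton.elim x c, dist_self]
      exact hδ
    have hvol : (volume : Measure (Fin 0 → ℂ)).real univ = 1 := by
      simp [Measure.real, volume_pi, Measure.pi_univ]
    have hconst : (fun y : Fin 0 → ℂ => ‖g y‖) = fun _ => ‖g c‖ :=
      funext fun y => by rw [Subsingleton.elim y c]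
    rw [pow_zero, inv_one, one_mul, hball, setIntegral_univ, hconst, integral_const, hvol]
    simp
  | succ m IH =>
    intro g c δ hδ U hU hsub hg
    have hπ := Real.pi_pos
    -- the linear change of variables
    set T : ℂ × (Fin m → ℂ) → (Fin (m+1) → ℂ) := fun p => Fin.cons p.1 p.2 with hT
    have hTdiff : Differentiable ℂ T := by
      rw [differentiable_pi]
      intro i
      refine Fin.cases ?_ ?_ i
      · simp only [hT, Fin.cons_zero]
        exact differentiable_fst
      · intro j
        simp only [hT, Fin.cons_succ]
        exact differentiable_pi.mp differentiable_snd j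
    set W : Set (ℂ × (Fin m → ℂ)) := T ⁻¹' U with hW
    have hWopen : IsOpen W := hU.preimage hTdiff.continuous
    set G : ℂ × (Fin m → ℂ) → ℂ := fun p => g (T p) with hG
    have hGd : DifferentiableOn ℂ G W := hg.comp hTdiff.differentiableOn (fun p hp => hp)
    -- membership facts
    have hconsCB : ∀ (x : ℂ) (y : Fin m → ℂ), x ∈ Metric.closedBall (c 0) δ →
        y ∈ Metric.closedBall (Fin.tail c) δ → Fin.cons x y ∈ Metric.closedBall c δ := by
      intro x y hx hy
      rw [Metric.mem_closedBall] at *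
      rw [dist_pi_le_iff hδ.le]
      intro i
      refine Fin.cases ?_ ?_ i
      · simpa using hx
      · intro j
        simp only [Fin.cons_succ]
        calc dist (y j) (c j.succ) ≤ dist y (Fin.tail c) := dist_le_pi_dist y (Fin.tail c) j
          _ ≤ δ := hy
    -- subset fact for the product closed polydisc
    have hprodsub : Metric.closedBall (c 0) δ ×ˢ Metric.closedBall (Fin.tail c) δ ⊆ W := by
      rintro ⟨x, y⟩ ⟨hx, hy⟩
      exact hsub (hconsCB x y hx hy)
    -- integrability of ‖G‖ on the product
    have hGint : IntegrableOn (fun p => ‖G p‖)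
        (Metric.closedBall (c 0) δ ×ˢ Metric.closedBall (Fin.tail c) δ) := by
      apply ContinuousOn.integrableOn_compact
      · exact (isCompact_closedBall _ _).prod (isCompact_closedBall _ _)
      · exact (hGd.continuousOn.mono hprodsub).norm
    have hGint' : IntegrableOn (fun p => ‖G p‖)
        (Metric.ball (c 0) δ ×ˢ Metric.ball (Fin.tail c) δ) :=
      hGint.mono_set (Set.prod_mono Metric.ball_subset_closedBall Metric.ball_subset_closedBall)
    -- step 1 : disc mean value in the first coordinate
    have hstep1 : ‖g c‖ ≤ (π * δ^2)⁻¹ *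
        ∫ a in Metric.ball (c 0) δ, ‖G (a, Fin.tail c)‖ := by
      have hcc : g c = G (c 0, Fin.tail c) := by
        rw [hG]; simp only [hT, Fin.cons_self_tail]
      rw [hcc]
      apply my_disc_mean (fun a => G (a, Fin.tail c)) (c 0) δ hδ {a : ℂ | (a, Fin.tail c) ∈ W}
      · exact hWopen.preimage (continuous_id.prodMk continuous_const)
      · intro a ha
        exact hprodsub ⟨ha, Metric.mem_closedBall_self hδ.le⟩
      · exact hGd.comp ((differentiable_id.prodMk (differentiable_const _)).differentiableOn)
          (fun a ha => ha)
    -- step 2 : induction hypothesis in the remaining coordinates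
    have hstep2 : ∀ a ∈ Metric.ball (c 0) δ, ‖G (a, Fin.tail c)‖ ≤
        ((π * δ^2)^m)⁻¹ * ∫ y in Metric.ball (Fin.tail c) δ, ‖G (a, y)‖ := by
      intro a ha
      apply IH (fun y => G (a, y)) (Fin.tail c) δ hδ {y | (a, y) ∈ W}
      · exact hWopen.preimage (continuous_const.prodMk continuous_id)
      · intro y hy
        exact hprodsub ⟨Metric.ball_subset_closedBall ha, hy⟩
      · exact hGd.comp ((differentiable_const _|>.prodMk differentiable_id).differentiableOn)
          (fun y hy => hy)
    -- step 3 : integrate step 2 over the first coordinate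
    set φ : ℂ → ℝ := fun a => ∫ y in Metric.ball (Fin.tail c) δ, ‖G (a, y)‖ with hφ
    have hφint : IntegrableOn φ (Metric.ball (c 0) δ) := by
      have h1 : Integrable (fun p => ‖G p‖)
          ((volume.restrict (Metric.ball (c 0) δ)).prod
            (volume.restrict (Metric.ball (Fin.tail c) δ))) := by
        rw [Measure.prod_restrict, ← Measure.volume_eq_prod]
        exact hGint'
      exact h1.integral_prod_left
    have hstep3 : ∫ a in Metric.ball (c 0) δ, ‖G (a, Fin.tail c)‖ ≤
        ((π * δ^2)^m)⁻¹ * ∫ a in Metric.ball (c 0) δ, φ a := by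
      rw [← integral_const_mul]
      apply integral_mono_of_nonneg
      · filter_upwards with a using norm_nonneg _
      · exact (hφint.const_mul _)
      · filter_upwards [ae_restrict_mem measurableSet_ball] with a ha
        exact hstep2 a ha
    -- step 4 : Fubini
    have hstep4 : ∫ a in Metric.ball (c 0) δ, φ a
        = ∫ p in Metric.ball (c 0) δ ×ˢ Metric.ball (Fin.tail c) δ, ‖G p‖ := by
      rw [Measure.volume_eq_prod ℂ (Fin m → ℂ), setIntegral_prod]
      rw [← Measure.volume_eq_prod]
      exact hGint'
    -- step 5 : change of variables back to the polydisc
    have hstep5 : ∫ p in Metric.ball (c 0) δ ×ˢ Metric.ball (Fin.tail c) δ, ‖G p‖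
        = ∫ x in Metric.ball c δ, ‖g x‖ := by
      set e := MeasurableEquiv.piFinSuccAbove (fun _ : Fin (m+1) => ℂ) 0 with he
      have vp : MeasurePreserving e volume volume :=
        volume_preserving_piFinSuccAbove (fun _ : Fin (m+1) => ℂ) 0
      have hpre : e ⁻¹' (Metric.ball (c 0) δ ×ˢ Metric.ball (Fin.tail c) δ)
          = Metric.ball c δ := by
        ext x
        simp only [mem_preimage, Set.mem_prod, he, MeasurableEquiv.piFinSuccAbove_apply,
          Metric.mem_ball]
        rw [dist_pi_lt_iff hδ, dist_pi_lt_iff hδ, Fin.forall_fin_succ]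
        constructor
        · rintro ⟨h0, hrest⟩
          exact ⟨h0, fun j => hrest j⟩
        · rintro ⟨h0, hrest⟩
          exact ⟨h0, fun j => hrest j⟩
      have := vp.setIntegral_preimage_emb e.measurableEmbedding (fun p => ‖G p‖)
        (Metric.ball (c 0) δ ×ˢ Metric.ball (Fin.tail c) δ)
      rw [hpre] at this
      rw [← this]
      apply setIntegral_congr_fun measurableSet_ball
      intro x _
      simp only [hG, hT, he, MeasurableEquiv.piFinSuccAbove_apply,
        Fin.insertNthEquiv_zero, Fin.consEquiv_symm_apply, Fin.removeNth_zero,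
        Fin.cons_self_tail]
    -- combine
    have hpos : (0:ℝ) ≤ (π * δ^2)⁻¹ := by positivity
    calc ‖g c‖ ≤ (π * δ^2)⁻¹ * ∫ a in Metric.ball (c 0) δ, ‖G (a, Fin.tail c)‖ := hstep1
      _ ≤ (π * δ^2)⁻¹ * (((π * δ^2)^m)⁻¹ * ∫ a in Metric.ball (c 0) δ, φ a) :=
          mul_le_mul_of_nonneg_left hstep3 hpos
      _ = ((π * δ^2)^(m+1))⁻¹ * ∫ a in Metric.ball (c 0) δ, φ a := by
          rw [← mul_assoc, ← mul_inv, ← pow_succ']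
      _ = ((π * δ^2)^(m+1))⁻¹ * ∫ x in Metric.ball c δ, ‖g x‖ := by
          rw [hstep4, hstep5]


end CauchyL2Aux

section CauchyL2Main

open scoped Real

/-- **Cauchy–L² estimate.** For a ball `B ⊆ ℂ^{n-1}` centered at the origin and
`0 < r < R < 1`, the value `|f(z)|²` of a function `f` holomorphic on a neighborhood
of the closure of `B × RΔ`, at any point `z ∈ (1-ε)(B × Δ)` with `|z₂| < r`, is
bounded by a constant (depending only on `B, R, r, ε`) times `∫_{B × (RΔ \ rΔ̄)} |f|²`. -/
theorem cauchy_l2_annulus_estimate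
    {n : ℕ} (s R r ε : ℝ) (hs : 0 < s)
    (hr : 0 < r) (hrR : r < R) (hR : R < 1) (hε : 0 < ε) (hεR : ε < 1 - R) :
    ∃ C > (0:ℝ), ∀ (V : Set ((Fin (n-1) → ℂ) × ℂ)) (f : (Fin (n-1) → ℂ) × ℂ → ℂ),
      IsOpen V →
      closure ((Metric.ball (0 : Fin (n-1) → ℂ) s) ×ˢ (Metric.ball (0:ℂ) R)) ⊆ V →
      DifferentiableOn ℂ f V →
      ∀ z ∈ (fun p : (Fin (n-1) → ℂ) × ℂ => ((1-ε : ℝ) : ℂ) • p) ''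
          ((Metric.ball (0 : Fin (n-1) → ℂ) s) ×ˢ (Metric.ball (0:ℂ) 1)),
        ‖z.2‖ < r →
        ‖f z‖^2 ≤ C * ∫ w in (Metric.ball (0 : Fin (n-1) → ℂ) s) ×ˢ
          (Metric.ball (0:ℂ) R \ Metric.closedBall (0:ℂ) r), ‖f w‖^2 := by
  have hπ := Real.pi_pos
  set m := n - 1 with hm
  set δ : ℝ := ε * s with hδdef
  have hδ : 0 < δ := mul_pos hε hs
  set C₁ : ℝ := 2*R/((R-r) * π * (R^2 - ((r+R)/2)^2)) with hC₁
  have hrR2 : ((r+R)/2)^2 < R^2 := by nlinarith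
  have hC₁pos : 0 < C₁ := by
    apply div_pos (by linarith)
    apply mul_pos (mul_pos (by linarith) hπ)
    linarith
  set C : ℝ := ((π * δ^2)^m)⁻¹ * C₁ with hC
  have hCpos : 0 < C := by
    apply mul_pos _ hC₁pos
    rw [inv_pos]
    positivity
  refine ⟨C, hCpos, ?_⟩
  intro V f hV hVsub hf z hz hz2
  obtain ⟨p, hp, rfl⟩ := hz
  set z := ((1-ε : ℝ) : ℂ) • p with hz
  have h1ε : 0 < 1 - ε := by linarith
  -- the closed product ball is inside V
  have hVsub' : Metric.closedBall (0 : Fin m → ℂ) s ×ˢ Metric.closedBall (0:ℂ) R ⊆ V := by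
    intro q hq
    apply hVsub
    rw [closure_prod_eq]
    constructor
    · rcases eq_or_ne (closure (Metric.ball (0 : Fin m → ℂ) s)) (Metric.closedBall 0 s) with h | h
      · rw [h]; exact hq.1
      · exfalso; exact h (closure_ball 0 hs.ne')
    · rw [closure_ball (0:ℂ) (by linarith : R ≠ 0)]
      exact hq.2
  -- z bounds
  have hz1 : ‖z.1‖ < (1-ε) * s := by
    rw [hz]
    simp only [Prod.smul_fst]
    rw [norm_smul, Complex.norm_real, Real.norm_eq_abs, abs_of_pos h1ε]
    have := hp.1
    rw [mem_ball_zero_iff] at this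
    exact mul_lt_mul_of_pos_left this h1ε
  -- closed polydisc around z.1 is inside the s-ball
  have hpoly : ∀ y : Fin m → ℂ, y ∈ Metric.closedBall z.1 δ →
      y ∈ Metric.closedBall (0 : Fin m → ℂ) s ∧ y ∈ Metric.ball (0 : Fin m → ℂ) s := by
    intro y hy
    rw [Metric.mem_closedBall] at hy
    have : ‖y‖ < s := by
      calc ‖y‖ = ‖y - z.1 + z.1‖ := by ring_nf
        _ ≤ ‖y - z.1‖ + ‖z.1‖ := norm_add_le _ _
        _ ≤ δ + ‖z.1‖ := by
            apply add_le_add_left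
            rwa [← dist_eq_norm]
        _ < ε * s + (1-ε)*s := by rw [hδdef]; linarith
        _ = s := by ring
    constructor
    · rw [Metric.mem_closedBall, dist_zero_right]; exact this.le
    · rw [Metric.mem_ball, dist_zero_right]; exact this
  -- g1 : slice in the first coordinates, squared
  set g1 : (Fin m → ℂ) → ℂ := fun y => (f (y, z.2))^2 with hg1
  have hU₁open : IsOpen {y : Fin m → ℂ | (y, z.2) ∈ V} :=
    hV.preimage (continuous_id.prodMk continuous_const)
  have hsubU₁ : Metric.closedBall z.1 δ ⊆ {y : Fin m → ℂ | (y, z.2) ∈ V} := by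
    intro y hy
    apply hVsub'
    refine ⟨(hpoly y hy).1, ?_⟩
    rw [Metric.mem_closedBall, dist_zero_right]
    calc ‖z.2‖ ≤ r := le_of_lt (by exact hz2)
      _ ≤ R := hrR.le
  have hg1d : DifferentiableOn ℂ g1 {y : Fin m → ℂ | (y, z.2) ∈ V} := by
    apply DifferentiableOn.pow
    exact hf.comp ((differentiable_id.prodMk (differentiable_const _)).differentiableOn)
      (fun y hy => hy)
  have hmean := my_polydisc_mean m g1 z.1 δ hδ _ hU₁open hsubU₁ hg1d
  have hzval : ‖g1 z.1‖ = ‖f z‖^2 := by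
    rw [hg1]
    simp only [norm_pow]
  -- annulus bound for each slice
  set Ann : Set ℂ := Metric.ball (0:ℂ) R \ Metric.closedBall 0 r with hAnn
  have hann : ∀ y ∈ Metric.ball z.1 δ,
      ‖g1 y‖ ≤ C₁ * ∫ w in Ann, ‖f (y, w)‖^2 := by
    intro y hy
    have hy' := hpoly y (Metric.ball_subset_closedBall hy)
    have hU₂open : IsOpen {w : ℂ | (y, w) ∈ V} :=
      hV.preimage (continuous_const.prodMk continuous_id)
    have hsubU₂ : Metric.closedBall (0:ℂ) R ⊆ {w : ℂ | (y, w) ∈ V} := by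
      intro w hw
      exact hVsub' ⟨hy'.1, hw⟩
    have hg2d : DifferentiableOn ℂ (fun w => (f (y, w))^2) {w : ℂ | (y, w) ∈ V} := by
      apply DifferentiableOn.pow
      exact hf.comp ((differentiable_const _|>.prodMk differentiable_id)).differentiableOn
        (fun w hw => hw)
    have := my_annulus_bound (fun w => (f (y, w))^2) r R hr hrR _ hU₂open hsubU₂ hg2d z.2 hz2
    rw [← hAnn, ← hC₁] at this
    calc ‖g1 y‖ = ‖(fun w => (f (y, w))^2) z.2‖ := rfl
      _ ≤ C₁ * ∫ w in Ann, ‖(f (y, w))^2‖ := this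
      _ = C₁ * ∫ w in Ann, ‖f (y, w)‖^2 := by
          congr 1
          apply setIntegral_congr_fun (measurableSet_ball.diff measurableSet_closedBall)
          intro w _
          exact norm_pow _ 2
  -- integrability of ‖f‖² on the big product
  set Q : (Fin m → ℂ) × ℂ → ℝ := fun w => ‖f w‖^2 with hQ
  have hQint : IntegrableOn Q
      (Metric.closedBall (0 : Fin m → ℂ) s ×ˢ Metric.closedBall (0:ℂ) R) := by
    apply ContinuousOn.integrableOn_compact
    · exact (isCompact_closedBall _ _).prod (isCompact_closedBall _ _)
    · exact ((hf.continuousOn.mono hVsub').norm).pow 2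
  have hQint' : IntegrableOn Q (Metric.ball (0 : Fin m → ℂ) s ×ˢ Ann) := by
    apply hQint.mono_set
    apply Set.prod_mono Metric.ball_subset_closedBall
    exact fun w hw => Metric.ball_subset_closedBall hw.1
  set φ : (Fin m → ℂ) → ℝ := fun y => ∫ w in Ann, Q (y, w) with hφ
  have hφint : IntegrableOn φ (Metric.ball (0 : Fin m → ℂ) s) := by
    have h1 : Integrable Q
        ((volume.restrict (Metric.ball (0 : Fin m → ℂ) s)).prod (volume.restrict Ann)) := by
      rw [Measure.prod_restrict, ← Measure.volume_eq_prod]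
      exact hQint'
    exact h1.integral_prod_left
  have hφint2 : IntegrableOn φ (Metric.ball z.1 δ) :=
    hφint.mono_set (fun y hy => (hpoly y (Metric.ball_subset_closedBall hy)).2)
  have hφnonneg : ∀ y, 0 ≤ φ y := fun y => integral_nonneg (fun w => by positivity)
  -- chain of inequalities
  have hmono1 : ∫ y in Metric.ball z.1 δ, ‖g1 y‖ ≤ C₁ * ∫ y in Metric.ball z.1 δ, φ y := by
    rw [← integral_const_mul]
    apply integral_mono_of_nonneg
    · filter_upwards with y using norm_nonneg _
    · exact hφint2.const_mul _
    · filter_upwards [ae_restrict_mem measurableSet_ball] with y hy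
      exact hann y hy
  have hmono2 : ∫ y in Metric.ball z.1 δ, φ y ≤ ∫ y in Metric.ball (0 : Fin m → ℂ) s, φ y := by
    apply setIntegral_mono_set hφint
    · filter_upwards with y using hφnonneg y
    · apply HasSubset.Subset.eventuallyLE
      exact fun y hy => (hpoly y (Metric.ball_subset_closedBall hy)).2
  have hfub : ∫ y in Metric.ball (0 : Fin m → ℂ) s, φ y
      = ∫ w in Metric.ball (0 : Fin m → ℂ) s ×ˢ Ann, Q w := by
    rw [Measure.volume_eq_prod (Fin m → ℂ) ℂ, setIntegral_prod]
    rw [← Measure.volume_eq_prod]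
    exact hQint'
  have hint_nonneg : 0 ≤ ∫ y in Metric.ball z.1 δ, φ y :=
    integral_nonneg (fun y => hφnonneg y)
  have hconst : (0:ℝ) ≤ ((π * δ^2)^m)⁻¹ := by positivity
  calc ‖f z‖^2 = ‖g1 z.1‖ := hzval.symm
    _ ≤ ((π * δ^2)^m)⁻¹ * ∫ y in Metric.ball z.1 δ, ‖g1 y‖ := hmean
    _ ≤ ((π * δ^2)^m)⁻¹ * (C₁ * ∫ y in Metric.ball z.1 δ, φ y) :=
        mul_le_mul_of_nonneg_left hmono1 hconst
    _ ≤ ((π * δ^2)^m)⁻¹ * (C₁ * ∫ y in Metric.ball (0 : Fin m → ℂ) s, φ y) := by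
        apply mul_le_mul_of_nonneg_left _ hconst
        exact mul_le_mul_of_nonneg_left hmono2 hC₁pos.le
    _ = C * ∫ w in Metric.ball (0 : Fin m → ℂ) s ×ˢ Ann, Q w := by
        rw [hfub, hC, mul_assoc]

end CauchyL2Main
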